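/- Let a,b be integers with b ≥ a ≥ 2. Every 3-partite 3-uniform hypergraph H with parts V₁,V₂,V₃, where |V₁|=|V₂|=a and |V₃|=b, that contains no matching of size a satisfies e(H) ≤ (a−1)ab. -/

import Mathlib

open Finset

/-- A 3-partite 3-graph with parts of sizes `a, a, b` (`b ≥ a ≥ 2`) and
no matching of size `a` has at most `(a-1)·a·b` edges. -/
theorem stmt_1 (a b : ℕ) (ha : 2 ≤ a) (hab : a ≤ b)
    (E : Finset (Fin a × Fin a × Fin b))
    (hM : ¬ ∃ M : Finset (Fin a × Fin a × Fin b), M ⊆ E ∧ M.card = a ∧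
      (∀ e ∈ M, ∀ f ∈ M, e ≠ f →
        e.1 ≠ f.1 ∧ e.2.1 ≠ f.2.1 ∧ e.2.2 ≠ f.2.2)) :
    E.card ≤ (a - 1) * a * b := by
  classical
  have ha0 : 0 < a := by omega
  have hb0 : 0 < b := by omega
  set P := Equiv.Perm (Fin a) × (Fin a ↪ Fin b) with hP
  -- the number of pairs (σ, τ) with σ x = y and τ x = z
  set c : Fin a → Fin a → Fin b → ℕ := fun x y z =>
    (univ.filter (fun p : P => p.1 x = y ∧ p.2 x = z)).card with hc
  have hc_const : ∀ x x' y y' z z', c x y z = c x' y' z' := by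
    intro x x' y y' z z'
    simp only [hc]
    apply Finset.card_bij'
      (fun p _ => (((Equiv.swap x x').trans (p.1.trans (Equiv.swap y y'))),
        (((Equiv.swap x x').toEmbedding.trans p.2).trans (Equiv.swap z z').toEmbedding)))
      (fun p _ => (((Equiv.swap x' x).trans (p.1.trans (Equiv.swap y' y))),
        (((Equiv.swap x' x).toEmbedding.trans p.2).trans (Equiv.swap z' z).toEmbedding)))
    · intro p hp
      simp only [mem_filter, mem_univ, true_and] at hp ⊢
      simp [Equiv.swap_apply_right, hp.1, hp.2]
    · intro p hp
      simp only [mem_filter, mem_univ, true_and] at hp ⊢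
      simp [Equiv.swap_apply_right, hp.1, hp.2]
    · intro p hp
      ext i
      · simp [Equiv.swap_comm x' x, Equiv.swap_comm y' y]
      · simp [Equiv.swap_comm x' x, Equiv.swap_comm z' z]
    · intro p hp
      ext i
      · simp [Equiv.swap_comm x x', Equiv.swap_comm y y']
      · simp [Equiv.swap_comm x x', Equiv.swap_comm z z']
  set x0 : Fin a := ⟨0, ha0⟩ with hx0
  set z0 : Fin b := ⟨0, hb0⟩ with hz0
  set K := c x0 x0 z0 with hK
  have hKpos : 0 < K := by
    rw [hK, hc]
    apply Finset.card_pos.mpr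
    refine ⟨(Equiv.refl _,
      (Fin.castLEEmb hab).trans (Equiv.swap ((Fin.castLEEmb hab) x0) z0).toEmbedding), ?_⟩
    simp
  -- total number of pairs
  have htotal : (univ : Finset P).card = a * b * K := by
    rw [Finset.card_eq_sum_card_fiberwise
      (f := fun p : P => (p.1 x0, p.2 x0)) (t := univ) (fun p _ => mem_univ _)]
    have hfib : ∀ yz : Fin a × Fin b,
        (univ.filter fun p : P => (p.1 x0, p.2 x0) = yz).card = K := by
      rintro ⟨y, z⟩
      have heq : (univ.filter fun p : P => (p.1 x0, p.2 x0) = (y, z)) =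
             (univ.filter fun p : P => p.1 x0 = y ∧ p.2 x0 = z) := by
        apply filter_congr; intro p _; simp [Prod.ext_iff]
      rw [heq]
      exact hc_const x0 x0 y x0 z z0
    rw [Finset.sum_congr rfl (fun yz _ => hfib yz), Finset.sum_const, smul_eq_mul,
      card_univ]
    simp
  -- every pair has a "bad" coordinate
  have hbad : ∀ p : P, ∃ i, (i, p.1 i, p.2 i) ∉ E := by
    intro p
    by_contra h
    push_neg at h
    apply hM
    refine ⟨Finset.univ.image (fun i => (i, p.1 i, p.2 i)), ?_, ?_, ?_⟩
    · intro e he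
      simp only [mem_image, mem_univ, true_and] at he
      obtain ⟨i, rfl⟩ := he
      exact h i
    · rw [Finset.card_image_of_injective _ (fun i j hij => congrArg Prod.fst hij)]
      simp
    · intro e he f hf hef
      simp only [mem_image, mem_univ, true_and] at he hf
      obtain ⟨i, rfl⟩ := he; obtain ⟨j, rfl⟩ := hf
      have hij : i ≠ j := fun hh => hef (by rw [hh])
      exact ⟨hij, fun hh => hij (p.1.injective hh), fun hh => hij (p.2.injective hh)⟩
  set T : Finset (P × Fin a) :=
    univ.filter (fun q => (q.2, q.1.1 q.2, q.1.2 q.2) ∉ E) with hT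
  have hPT : (univ : Finset P).card ≤ T.card := by
    apply Finset.card_le_card_of_surjOn (fun q : P × Fin a => q.1)
    intro p _
    obtain ⟨i, hi⟩ := hbad p
    exact ⟨(p, i), by simp [hT, hi], rfl⟩
  -- count T fiberwise over non-edges
  have hTN : T.card = (univ \ E).card * K := by
    rw [Finset.card_eq_sum_card_fiberwise
      (f := fun q : P × Fin a => (q.2, q.1.1 q.2, q.1.2 q.2)) (t := univ \ E) ?_]
    · rw [Finset.sum_congr rfl ?_, Finset.sum_const, smul_eq_mul]
      rintro ⟨x, y, z⟩ ht
      have hxyz : (x, y, z) ∉ E := (Finset.mem_sdiff.mp ht).2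
      have hfib : (T.filter fun q => (q.2, q.1.1 q.2, q.1.2 q.2) = (x, y, z)).card
           = c x y z := by
        simp only [hc]
        refine Finset.card_bij' (fun q _ => q.1) (fun p _ => (p, x)) ?_ ?_ ?_ ?_
        case _ =>
          rintro ⟨p, i⟩ hq
          simp only [hT, mem_filter, mem_univ, true_and, Prod.mk.injEq] at hq
          obtain ⟨h1, rfl, h2, h3⟩ := hq
          simp only [mem_filter, mem_univ, true_and]
          exact ⟨h2, h3⟩
        case _ =>
          intro p hp
          simp only [mem_filter, mem_univ, true_and] at hp
          simp only [hT, mem_filter, mem_univ, true_and, Prod.mk.injEq]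
          exact ⟨by rw [hp.1, hp.2]; exact hxyz, hp.1, hp.2⟩
        case _ =>
          rintro ⟨p, i⟩ hq
          simp only [hT, mem_filter, mem_univ, true_and, Prod.mk.injEq] at hq
          obtain ⟨h1, rfl, h2, h3⟩ := hq
          rfl
        case _ =>
          intro p hp
          rfl
      rw [hfib]
      exact hc_const x x0 y x0 z z0
    · intro q hq
      simp only [hT, Finset.mem_coe, mem_filter, mem_univ, true_and] at hq
      exact Finset.mem_sdiff.mpr ⟨Finset.mem_univ _, hq⟩
  have hN : a * b ≤ (univ \ E).card := by
    have h1 : a * b * K ≤ (univ \ E).card * K := by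
      rw [← htotal, ← hTN]; exact hPT
    exact Nat.le_of_mul_le_mul_right h1 hKpos
  have hsd : (univ \ E).card = a * a * b - E.card := by
    rw [Finset.card_sdiff_of_subset (subset_univ E), card_univ]
    simp [mul_assoc]
  have hle : E.card ≤ a * a * b := by
    calc E.card ≤ (univ : Finset (Fin a × Fin a × Fin b)).card :=
          Finset.card_le_card (subset_univ E)
      _ = a * a * b := by rw [card_univ]; simp [mul_assoc]
  have hfinal : (a - 1) * a * b = a * a * b - a * b := by
    rw [Nat.sub_mul, Nat.sub_mul, one_mul]
  rw [hfinal]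
  omega
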